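/- There is no total computable function F : ℕ × ℕ → ℕ such that F(x,y) = 1 if for all z, φ_x(z)↓ implies φ_x(z) ≤ φ_y(z), and F(x,y) = 0 otherwise, where φ is a Gödel numbering of partial computable functions. -/

import Mathlib

open Nat.Partrec (Code)

/-- The Gödel numbering of partial computable functions via `Nat.Partrec.Code`. -/
noncomputable def godel (x : ℕ) : ℕ →. ℕ :=
  (Denumerable.ofNat Nat.Partrec.Code x).eval

/-- There is no total computable `F : ℕ × ℕ → ℕ` such that `F (x, y) = 1` if for all `z`,
`φ_x z ↓` implies `φ_x z ≤ φ_y z`, and `F (x, y) = 0` otherwise. -/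
theorem sup_interpretation_verification_undecidable :
    ¬ ∃ F : ℕ × ℕ → ℕ, Computable F ∧
      ∀ x y : ℕ,
        ((∀ z a : ℕ, a ∈ godel x z → ∃ b ∈ godel y z, a ≤ b) → F (x, y) = 1) ∧
        (¬ (∀ z a : ℕ, a ∈ godel x z → ∃ b ∈ godel y z, a ≤ b) → F (x, y) = 0) := by
  rintro ⟨F, hF, hspec⟩
  -- a code `c₀` such that `c₀.eval m = ((ofNat Code m.unpair.1).eval 0).map (fun _ => 1)`
  obtain ⟨c₀, hc₀⟩ : ∃ c₀ : Code, ∀ m : ℕ,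
      c₀.eval m =
        ((Denumerable.ofNat Code m.unpair.1).eval 0).map (fun _ => 1) := by
    have h1 : Partrec fun m : ℕ => (Denumerable.ofNat Code m.unpair.1).eval 0 :=
      Nat.Partrec.Code.eval_part.comp
        ((Computable.ofNat Code).comp
          ((Primrec.fst.comp Primrec.unpair).to_comp))
        (Computable.const 0)
    have h2 : Partrec fun m : ℕ =>
        ((Denumerable.ofNat Code m.unpair.1).eval 0).map (fun _ => (1 : ℕ)) :=
      h1.map ((Computable.const 1).comp Computable.fst).to₂
    obtain ⟨c₀, hc₀⟩ := Nat.Partrec.Code.exists_code.1 (Partrec.nat_iff.1 h2)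
    exact ⟨c₀, fun m => congrFun hc₀ m⟩
  set y₀ : ℕ := Encodable.encode (Nat.Partrec.Code.const 0) with hy₀
  have hgy : ∀ z : ℕ, godel y₀ z = Part.some 0 := by
    intro z
    simp [godel, hy₀, Nat.Partrec.Code.eval_const]
  -- index of the reduced code
  set X : Code → ℕ := fun c =>
    Encodable.encode (Nat.Partrec.Code.curry c₀ (Encodable.encode c)) with hX
  have hgX : ∀ (c : Code) (z : ℕ),
      godel (X c) z = (c.eval 0).map (fun _ => 1) := by
    intro c z
    simp only [godel, hX, Denumerable.ofNat_encode, Nat.Partrec.Code.eval_curry, hc₀]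
    simp
  -- F decides the halting problem at input 0
  have key : ∀ c : Code, (c.eval 0).Dom ↔ F (X c, y₀) = 0 := by
    intro c
    constructor
    · intro hdom
      apply (hspec (X c) y₀).2
      intro hall
      obtain ⟨b, hb, hle⟩ := hall 0 1 (by
        rw [hgX]
        exact (Part.mem_map_iff _).2 ⟨(c.eval 0).get hdom, Part.get_mem hdom, rfl⟩)
      rw [hgy] at hb
      simp at hb
      omega
    · intro h0
      by_contra hdom
      have h1 : F (X c, y₀) = 1 := by
        apply (hspec (X c) y₀).1
        intro z a ha
        rw [hgX] at ha
        obtain ⟨w, hw, _⟩ := (Part.mem_map_iff _).1 ha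
        exact absurd (Part.dom_iff_mem.2 ⟨w, hw⟩) hdom
      omega
  -- contradiction with the halting problem
  apply ComputablePred.halting_problem 0
  rw [ComputablePred.computable_iff]
  refine ⟨fun c => decide (F (X c, y₀) = 0), ?_, ?_⟩
  · have hXc : Computable X := by
      have : Primrec X :=
        Primrec.encode.comp
          (Nat.Partrec.Code.primrec₂_curry.comp (Primrec.const c₀) Primrec.encode)
      exact this.to_comp
    have hFc : Computable fun c : Code => F (X c, y₀) :=
      hF.comp (hXc.pair (Computable.const y₀))
    exact ((Primrec.eq.comp Primrec.id (Primrec.const 0)).decide.to_comp).comp hFc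
  · funext c
    simp [key c]
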